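/- Let b ≥ 1 be odd, k ≤ n-2, and let s = s_1...s_k be a prefix of some element of R_n(b). If t is the ≺-first sequence in R_n(b) with prefix s, and M = min{b, max{s_i}_{i=1}^k + 1}, then: (1) if ∑_{i=1}^k s_i is odd and M is odd, t = s M 0...0; (2) if ∑_{i=1}^k s_i is odd and M is even, t = s M (M+1) 0...0; (3) if ∑_{i=1}^k s_i is even, t = s 0...0. -/

import Mathlib

/-- `s` (0-indexed) is a restricted growth function of length `n`:
`s 0 = 0` and each next entry is at most the max of previous entries plus 1. -/
def IsRGF (n : ℕ) (s : ℕ → ℕ) : Prop :=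
  s 0 = 0 ∧ ∀ i, i + 1 < n → s (i + 1) ≤ (Finset.range (i + 1)).sup s + 1

/-- membership in `R_n(b)`: restricted growth function bounded by `b`. -/
def InRnb (n b : ℕ) (s : ℕ → ℕ) : Prop :=
  IsRGF n s ∧ ∀ i < n, s i ≤ b

/-- membership in `R*_n(b)`: restricted growth function with maximum exactly `b`. -/
def InRnbStar (n b : ℕ) (s : ℕ → ℕ) : Prop :=
  IsRGF n s ∧ (∀ i < n, s i ≤ b) ∧ ∃ i < n, s i = b

/-- Reflected Gray Code Order on length-`n` sequences. -/
def rgcLt (n : ℕ) (s t : ℕ → ℕ) : Prop :=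
  ∃ k < n, (∀ i < k, s i = t i) ∧
    ((Even (∑ i ∈ Finset.range k, s i) ∧ s k < t k) ∨
     (Odd (∑ i ∈ Finset.range k, s i) ∧ t k < s k))

/-- `U_k`: number of indices `i < k` with `s i` nonzero and even. -/
def Uval (s : ℕ → ℕ) (k : ℕ) : ℕ :=
  ((Finset.range k).filter (fun i => s i ≠ 0 ∧ Even (s i))).card

/-- co-Reflected Gray Code Order on length-`n` sequences. -/
def coRgcLt (n : ℕ) (s t : ℕ → ℕ) : Prop :=
  ∃ k < n, (∀ i < k, s i = t i) ∧
    ((Even (Uval s k) ∧ s k < t k) ∨ (Odd (Uval s k) ∧ t k < s k))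

/-- form of the `≺`-first sequence of `R_n(b)` (`b` odd) with a fixed prefix. -/
theorem stmt4 (n b k : ℕ) (hbodd : Odd b) (hb1 : 1 ≤ b) (hk1 : 1 ≤ k) (hk : k + 2 ≤ n)
    (p t : ℕ → ℕ) (hp : InRnb n b p) (ht : InRnb n b t)
    (htp : ∀ i < k, t i = p i)
    (hfirst : ∀ u : ℕ → ℕ, InRnb n b u → (∀ i < k, u i = p i) →
      (∀ i < n, u i = t i) ∨ rgcLt n t u) :
    (Odd (∑ i ∈ Finset.range k, p i) → Odd (min b ((Finset.range k).sup p + 1)) →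
      t k = min b ((Finset.range k).sup p + 1) ∧ ∀ i, k < i → i < n → t i = 0) ∧
    (Odd (∑ i ∈ Finset.range k, p i) → Even (min b ((Finset.range k).sup p + 1)) →
      t k = min b ((Finset.range k).sup p + 1) ∧
      t (k + 1) = min b ((Finset.range k).sup p + 1) + 1 ∧
      ∀ i, k + 1 < i → i < n → t i = 0) ∧
    (Even (∑ i ∈ Finset.range k, p i) → ∀ i, k ≤ i → i < n → t i = 0) := by
  have hkn : k < n := by omega
  have hk1n : k + 1 < n := by omega
  set S := ∑ i ∈ Finset.range k, p i with hSdef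
  set M := min b ((Finset.range k).sup p + 1) with hMdef
  have hsupt : (Finset.range k).sup t = (Finset.range k).sup p :=
    Finset.sup_congr rfl fun i hi => htp i (Finset.mem_range.mp hi)
  have hsumt : ∑ i ∈ Finset.range k, t i = S :=
    Finset.sum_congr rfl fun i hi => htp i (Finset.mem_range.mp hi)
  have hkk : k - 1 + 1 = k := by omega
  have hMle : M ≤ (Finset.range k).sup p + 1 := min_le_right _ _
  have hMb : M ≤ b := min_le_left _ _
  have hMeq' : M = b ∨ M = (Finset.range k).sup p + 1 := min_choice _ _
  have htk : t k ≤ M := by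
    have h1 := ht.1.2 (k - 1) (by omega)
    rw [hkk, hsupt] at h1
    exact le_min (ht.2 k hkn) h1
  have hp0 : p 0 = 0 := hp.1.1
  have hpb : ∀ i < k, p i ≤ b := fun i hi => hp.2 i (by omega)
  have hpsup : ∀ i < k, p i ≤ (Finset.range k).sup p :=
    fun i hi => Finset.le_sup (Finset.mem_range.mpr hi)
  refine ⟨?_, ?_, ?_⟩
  · -- Case 1 : S odd, M odd
    intro hOdd hModd
    set c : ℕ → ℕ := fun i => if i < k then p i else if i = k then M else 0 with hcdef
    have hck : c k = M := by simp [hcdef]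
    have hcpre : ∀ i < k, c i = p i := fun i hi => by simp [hcdef, hi]
    have hc0 : ∀ i, k < i → c i = 0 := fun i hi => by
      show (if i < k then p i else if i = k then M else 0) = 0
      rw [if_neg (by omega), if_neg (by omega)]
    have hsupc : ∀ m ≤ k, (Finset.range m).sup c = (Finset.range m).sup p :=
      fun m hm => Finset.sup_congr rfl fun i hi => hcpre i (by
        have := Finset.mem_range.mp hi; omega)
    have hc : InRnb n b c := by
      refine ⟨⟨by rw [hcpre 0 (by omega)]; exact hp0, ?_⟩, ?_⟩
      · intro i hi
        rcases lt_trichotomy (i + 1) k with h | h | h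
        · rw [hcpre (i + 1) h, hsupc (i + 1) (by omega)]
          exact hp.1.2 i (by omega)
        · rw [h, hck, hsupc k le_rfl]; exact hMle
        · rw [hc0 (i + 1) h]; omega
      · intro i hi
        rcases lt_trichotomy i k with h | h | h
        · rw [hcpre i h]; exact hpb i h
        · rw [h, hck]; exact hMb
        · rw [hc0 i h]; omega
    rcases hfirst c hc hcpre with heq | hlt
    · exact ⟨by rw [← heq k hkn, hck], fun i h1 h2 => by rw [← heq i h2, hc0 i h1]⟩
    · exfalso
      obtain ⟨j, hjn, hagree, hor⟩ := hlt
      have hjk : k ≤ j := by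
        by_contra h
        push_neg at h
        have : t j = c j := by rw [htp j h, hcpre j h]
        rcases hor with ⟨_, h2⟩ | ⟨_, h2⟩ <;> omega
      rcases eq_or_lt_of_le hjk with h | h
      · rw [← h] at hor
        rw [hsumt, hck] at hor
        rcases hor with ⟨h1, _⟩ | ⟨_, h2⟩
        · rw [Nat.even_iff] at h1; rw [Nat.odd_iff] at hOdd; omega
        · omega
      · have hcj : c j = 0 := hc0 j h
        have hsum : ∑ i ∈ Finset.range j, t i = S + M := by
          rw [Finset.sum_congr rfl (fun i hi => hagree i (Finset.mem_range.mp hi))]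
          rw [← Finset.sum_subset (Finset.range_subset_range.mpr (by omega : k + 1 ≤ j))
            (fun x _ hx => hc0 x (by simpa using hx))]
          rw [Finset.sum_range_succ, hck,
            Finset.sum_congr rfl (fun i hi => hcpre i (Finset.mem_range.mp hi))]
        rw [hsum, hcj] at hor
        rcases hor with ⟨_, h2⟩ | ⟨h1, _⟩
        · omega
        · rw [Nat.odd_iff] at h1 hOdd hModd; omega
  · -- Case 2 : S odd, M even
    intro hOdd hMev
    have hMne : M ≠ b := by
      intro h
      rw [Nat.even_iff] at hMev; rw [Nat.odd_iff] at hbodd; omega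
    have hMeq : M = (Finset.range k).sup p + 1 := hMeq'.resolve_left hMne
    have hM1b : M + 1 ≤ b := by omega
    set c : ℕ → ℕ := fun i =>
      if i < k then p i else if i = k then M else if i = k + 1 then M + 1 else 0 with hcdef
    have hck : c k = M := by simp [hcdef]
    have hck1 : c (k + 1) = M + 1 := by simp [hcdef]
    have hcpre : ∀ i < k, c i = p i := fun i hi => by simp [hcdef, hi]
    have hc0 : ∀ i, k + 1 < i → c i = 0 := fun i hi => by
      show (if i < k then p i else if i = k then M else if i = k + 1 then M + 1 else 0) = 0
      rw [if_neg (by omega), if_neg (by omega), if_neg (by omega)]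
    have hsupc : ∀ m ≤ k, (Finset.range m).sup c = (Finset.range m).sup p :=
      fun m hm => Finset.sup_congr rfl fun i hi => hcpre i (by
        have := Finset.mem_range.mp hi; omega)
    have hc : InRnb n b c := by
      refine ⟨⟨by rw [hcpre 0 (by omega)]; exact hp0, ?_⟩, ?_⟩
      · intro i hi
        rcases lt_trichotomy (i + 1) k with h | h | h
        · rw [hcpre (i + 1) h, hsupc (i + 1) (by omega)]
          exact hp.1.2 i (by omega)
        · rw [h, hck, hsupc k le_rfl]; exact hMle
        · rcases eq_or_lt_of_le (show k + 1 ≤ i + 1 from h) with h' | h'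
          · have hik : i = k := by omega
            subst hik
            rw [hck1]
            have hle : M ≤ (Finset.range (i + 1)).sup c := by
              rw [← hck]; exact Finset.le_sup (Finset.mem_range.mpr (by omega))
            omega
          · rw [hc0 (i + 1) h']; omega
      · intro i hi
        rcases lt_trichotomy i k with h | h | h
        · rw [hcpre i h]; exact hpb i h
        · rw [h, hck]; exact hMb
        · rcases eq_or_lt_of_le (show k + 1 ≤ i from h) with h' | h'
          · rw [← h', hck1]; exact hM1b
          · rw [hc0 i h']; omega
    rcases hfirst c hc hcpre with heq | hlt
    · exact ⟨by rw [← heq k hkn, hck], by rw [← heq (k + 1) hk1n, hck1],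
        fun i h1 h2 => by rw [← heq i h2, hc0 i h1]⟩
    · exfalso
      obtain ⟨j, hjn, hagree, hor⟩ := hlt
      have hjk : k ≤ j := by
        by_contra h
        push_neg at h
        have : t j = c j := by rw [htp j h, hcpre j h]
        rcases hor with ⟨_, h2⟩ | ⟨_, h2⟩ <;> omega
      rcases eq_or_lt_of_le hjk with h | h
      · rw [← h] at hor
        rw [hsumt, hck] at hor
        rcases hor with ⟨h1, _⟩ | ⟨_, h2⟩
        · rw [Nat.even_iff] at h1; rw [Nat.odd_iff] at hOdd; omega
        · omega
      · have htkM : t k = M := by rw [hagree k h, hck]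
        rcases eq_or_lt_of_le (by omega : k + 1 ≤ j) with h' | h'
        · rw [← h'] at hor
          rw [Finset.sum_range_succ, hsumt, htkM, hck1] at hor
          have hsuple : (Finset.range (k + 1)).sup t ≤ M := by
            apply Finset.sup_le
            intro i hi
            rcases Nat.lt_succ_iff_lt_or_eq.mp (Finset.mem_range.mp hi) with h'' | h''
            · rw [htp i h'']
              have := hpsup i h''; omega
            · rw [h'', htkM]
          have htk1 : t (k + 1) ≤ M + 1 := by
            have h1 := ht.1.2 k (by omega)
            omega
          rcases hor with ⟨h1, _⟩ | ⟨_, h2⟩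
          · rw [Nat.even_iff] at h1; rw [Nat.odd_iff] at hOdd
            rw [Nat.even_iff] at hMev; omega
          · omega
        · have hcj : c j = 0 := hc0 j h'
          have hsum : ∑ i ∈ Finset.range j, t i = S + M + (M + 1) := by
            rw [Finset.sum_congr rfl (fun i hi => hagree i (Finset.mem_range.mp hi))]
            rw [← Finset.sum_subset (Finset.range_subset_range.mpr (by omega : k + 2 ≤ j))
              (fun x _ hx => hc0 x (by simp at hx; omega))]
            rw [Finset.sum_range_succ, Finset.sum_range_succ, hck, hck1,
              Finset.sum_congr rfl (fun i hi => hcpre i (Finset.mem_range.mp hi))]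
          rw [hsum, hcj] at hor
          rcases hor with ⟨_, h2⟩ | ⟨h1, _⟩
          · omega
          · rw [Nat.odd_iff] at h1 hOdd; rw [Nat.even_iff] at hMev; omega
  · -- Case 3 : S even
    intro hEv
    set c : ℕ → ℕ := fun i => if i < k then p i else 0 with hcdef
    have hcpre : ∀ i < k, c i = p i := fun i hi => by simp [hcdef, hi]
    have hc0 : ∀ i, k ≤ i → c i = 0 := fun i hi => by
      show (if i < k then p i else 0) = 0
      rw [if_neg (by omega)]
    have hsupc : ∀ m ≤ k, (Finset.range m).sup c = (Finset.range m).sup p :=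
      fun m hm => Finset.sup_congr rfl fun i hi => hcpre i (by
        have := Finset.mem_range.mp hi; omega)
    have hc : InRnb n b c := by
      refine ⟨⟨by rw [hcpre 0 (by omega)]; exact hp0, ?_⟩, ?_⟩
      · intro i hi
        rcases lt_or_ge (i + 1) k with h | h
        · rw [hcpre (i + 1) h, hsupc (i + 1) (by omega)]
          exact hp.1.2 i (by omega)
        · rw [hc0 (i + 1) h]; omega
      · intro i hi
        rcases lt_or_ge i k with h | h
        · rw [hcpre i h]; exact hpb i h
        · rw [hc0 i h]; omega
    rcases hfirst c hc hcpre with heq | hlt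
    · exact fun i h1 h2 => by rw [← heq i h2, hc0 i h1]
    · exfalso
      obtain ⟨j, hjn, hagree, hor⟩ := hlt
      have hjk : k ≤ j := by
        by_contra h
        push_neg at h
        have : t j = c j := by rw [htp j h, hcpre j h]
        rcases hor with ⟨_, h2⟩ | ⟨_, h2⟩ <;> omega
      have hcj : c j = 0 := hc0 j hjk
      have hsum : ∑ i ∈ Finset.range j, t i = S := by
        rw [Finset.sum_congr rfl (fun i hi => hagree i (Finset.mem_range.mp hi))]
        rw [← Finset.sum_subset (Finset.range_subset_range.mpr hjk)
          (fun x _ hx => hc0 x (by simpa using hx))]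
        exact Finset.sum_congr rfl (fun i hi => hcpre i (Finset.mem_range.mp hi))
      rw [hsum, hcj] at hor
      rcases hor with ⟨_, h2⟩ | ⟨h1, _⟩
      · omega
      · rw [Nat.odd_iff] at h1; rw [Nat.even_iff] at hEv; omega
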